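/- Assume all spins equal one half, s_j = 1/2 for j = 1, …, n, and assume the Bethe equations hold. Then for every i = 1, …, n: S(ε_i)² + (2/(ħ g²))((2ε_i − ω)S(ε_i) − 2M) = Σ_{j≠i} (S(ε_i) − S(ε_j))/(ε_i − ε_j). -/

import Mathlib

open BigOperators Finset

/-- Swap a double sum over off-diagonal pairs. -/
lemma swap_offdiag_sum {N : ℕ} (G : Fin N → Fin N → ℂ) :
    ∑ k, ∑ l ∈ Finset.univ.erase k, G k l
      = ∑ l, ∑ k ∈ Finset.univ.erase l, G k l := by
  refine Finset.sum_comm' ?_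
  intro x y
  simp [Finset.mem_erase, ne_comm, and_comm]

/-- for spins one half, the Bethe equations imply the closed
algebraic equations for `S(ε_i)`. -/
theorem closed_equations_spin_half
    (n M : ℕ) (hbar g ω : ℂ) (hhbar : hbar ≠ 0) (hg : g ≠ 0)
    (ε : Fin n → ℂ) (hε : Function.Injective ε) (s : Fin n → ℂ)
    (hs : ∀ j, s j = 1 / 2)
    (μ : Fin M → ℂ) (hμ : Function.Injective μ)
    (hμε : ∀ i j, μ i ≠ ε j)
    (a S : ℂ → ℂ)
    (ha : ∀ z, a z = (2 * z - ω) / g ^ 2 - ∑ j, hbar * s j / (z - ε j))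
    (hS : ∀ z, S z = ∑ i, 1 / (z - μ i))
    (bethe : ∀ i, a (μ i) + ∑ k ∈ Finset.univ.erase i, hbar / (μ i - μ k) = 0) :
    ∀ i, (S (ε i)) ^ 2 + (2 / (hbar * g ^ 2)) * ((2 * ε i - ω) * S (ε i) - 2 * M)
      = ∑ j ∈ Finset.univ.erase i, (S (ε i) - S (ε j)) / (ε i - ε j) := by
  intro i
  have hzμ : ∀ k, ε i - μ k ≠ 0 := fun k => sub_ne_zero.mpr (Ne.symm (hμε k i))
  have hμz : ∀ k j, μ k - ε j ≠ 0 := fun k j => sub_ne_zero.mpr (hμε k j)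
  have hμμ : ∀ k l : Fin M, k ≠ l → μ k - μ l ≠ 0 :=
    fun k l h => sub_ne_zero.mpr (fun e => h (hμ e))
  have hεε : ∀ j, j ≠ i → ε i - ε j ≠ 0 :=
    fun j h => sub_ne_zero.mpr (fun e => h (hε e.symm))
  set z := ε i with hz
  set f : Fin M → ℂ := fun k => 1 / (z - μ k) with hf
  set T : Fin M → ℂ := fun k => ∑ l ∈ Finset.univ.erase k, 1 / (μ k - μ l) with hTdef
  have hSz : S z = ∑ k, f k := hS z
  -- Bethe equations without division
  have hT : ∀ k, hbar * T k = - a (μ k) := by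
    intro k
    have hb := bethe k
    have h1 : ∑ l ∈ Finset.univ.erase k, hbar / (μ k - μ l) = hbar * T k := by
      rw [hTdef, Finset.mul_sum]
      exact Finset.sum_congr rfl fun l _ => by rw [mul_one_div]
    rw [h1] at hb
    linear_combination hb
  -- E1 : square of S
  have E1 : S z ^ 2 = (∑ k, f k ^ 2) + ∑ k, ∑ l ∈ Finset.univ.erase k, f k * f l := by
    rw [hSz, sq, Finset.sum_mul_sum, ← Finset.sum_add_distrib]
    refine Finset.sum_congr rfl fun k _ => ?_
    rw [sq, Finset.add_sum_erase _ (fun l => f k * f l) (Finset.mem_univ k)]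
  -- E2 : off diagonal part via partial fractions and Bethe
  have E2 : hbar * (∑ k, ∑ l ∈ Finset.univ.erase k, f k * f l)
      = -2 * ∑ k, a (μ k) * f k := by
    have step : ∀ k : Fin M, ∀ l ∈ Finset.univ.erase k,
        f k * f l = (1 / (μ k - μ l)) * f k - (1 / (μ k - μ l)) * f l := by
      intro k l hl
      have hlk : l ≠ k := (Finset.mem_erase.mp hl).1
      have h3 := hμμ k l (Ne.symm hlk)
      have h1 := hzμ k
      have h2 := hzμ l
      simp only [hf]
      field_simp
      ring
    have hsplit : ∑ k, ∑ l ∈ Finset.univ.erase k, f k * f l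
        = (∑ k, T k * f k) - ∑ k, ∑ l ∈ Finset.univ.erase k, (1 / (μ k - μ l)) * f l := by
      calc ∑ k, ∑ l ∈ Finset.univ.erase k, f k * f l
          = ∑ k, ∑ l ∈ Finset.univ.erase k,
              ((1 / (μ k - μ l)) * f k - (1 / (μ k - μ l)) * f l) :=
            Finset.sum_congr rfl fun k _ => Finset.sum_congr rfl (step k)
        _ = ∑ k, ((∑ l ∈ Finset.univ.erase k, (1 / (μ k - μ l)) * f k)
              - ∑ l ∈ Finset.univ.erase k, (1 / (μ k - μ l)) * f l) :=
            Finset.sum_congr rfl fun k _ => Finset.sum_sub_distrib _ _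
        _ = (∑ k, T k * f k) - ∑ k, ∑ l ∈ Finset.univ.erase k, (1 / (μ k - μ l)) * f l := by
            rw [Finset.sum_sub_distrib]
            congr 1
            exact Finset.sum_congr rfl fun k _ => by rw [hTdef, Finset.sum_mul]
    have hswap : ∑ k, ∑ l ∈ Finset.univ.erase k, (1 / (μ k - μ l)) * f l
        = - ∑ k, T k * f k := by
      rw [swap_offdiag_sum (fun k l => (1 / (μ k - μ l)) * f l)]
      rw [← Finset.sum_neg_distrib]
      refine Finset.sum_congr rfl fun l _ => ?_
      rw [hTdef, Finset.sum_mul, ← Finset.sum_neg_distrib]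
      refine Finset.sum_congr rfl fun k _ => ?_
      rw [← neg_sub (μ l) (μ k), one_div, inv_neg, ← one_div]
      ring
    rw [hsplit, hswap]
    have hpull : ∑ k, (hbar * T k) * f k = hbar * ∑ k, T k * f k := by
      rw [Finset.mul_sum]
      exact Finset.sum_congr rfl fun k _ => mul_assoc _ _ _
    have h4 : ∑ k, (hbar * T k) * f k = -∑ k, a (μ k) * f k := by
      rw [← Finset.sum_neg_distrib]
      exact Finset.sum_congr rfl fun k _ => by rw [hT k]; ring
    linear_combination (-2 : ℂ) * hpull + 2 * h4
  -- E3 : expand a(μ k) using spins 1/2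
  have ha' : ∀ k, g ^ 2 * (a (μ k) * f k)
      = ((2 * z - ω) * f k - 2)
        - ∑ j, (g ^ 2 * hbar / 2) * (f k * (1 / (μ k - ε j))) := by
    intro k
    have h1 := hzμ k
    rw [ha]
    have hsum : ∑ j, hbar * s j / (μ k - ε j)
        = ∑ j, (hbar / 2) * (1 / (μ k - ε j)) :=
      Finset.sum_congr rfl fun j _ => by rw [hs]; ring
    rw [hsum, sub_mul, mul_sub]
    congr 1
    · simp only [hf]
      field_simp
      ring
    · rw [Finset.sum_mul, Finset.mul_sum]
      exact Finset.sum_congr rfl fun j _ => by ring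
  have E3 : g ^ 2 * (∑ k, a (μ k) * f k)
      = ((2 * z - ω) * S z - 2 * (M : ℂ))
        - (g ^ 2 * hbar / 2) * (∑ k, ∑ j, f k * (1 / (μ k - ε j))) := by
    rw [Finset.mul_sum, Finset.sum_congr rfl fun k _ => ha' k, Finset.sum_sub_distrib]
    congr 1
    · rw [Finset.sum_sub_distrib, ← Finset.mul_sum, ← hSz, Finset.sum_const,
        Finset.card_univ, Fintype.card_fin, nsmul_eq_mul]
      ring
    · rw [Finset.mul_sum]
      exact Finset.sum_congr rfl fun k _ => (Finset.mul_sum _ _ _).symm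
  -- E4 : split the double sum over ε's
  have E4 : (∑ k, ∑ j, f k * (1 / (μ k - ε j)))
      = -(∑ k, f k ^ 2)
        + ∑ j ∈ Finset.univ.erase i, (S z - S (ε j)) / (z - ε j) := by
    rw [Finset.sum_comm]
    rw [← Finset.add_sum_erase _ (fun j => ∑ k, f k * (1 / (μ k - ε j))) (Finset.mem_univ i)]
    congr 1
    · rw [← Finset.sum_neg_distrib]
      refine Finset.sum_congr rfl fun k _ => ?_
      have h1 := hzμ k
      have h2 := hμz k i
      simp only [hf]
      rw [← hz] at h2 ⊢
      field_simp
      ring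
    · refine Finset.sum_congr rfl fun j hj => ?_
      have hji : j ≠ i := (Finset.mem_erase.mp hj).1
      have hij := hεε j hji
      have hSj : S (ε j) = ∑ k, 1 / (ε j - μ k) := hS (ε j)
      rw [hSz, hSj, ← Finset.sum_sub_distrib, Finset.sum_div]
      refine Finset.sum_congr rfl fun k _ => ?_
      have h1 := hzμ k
      have h2 : ε j - μ k ≠ 0 := sub_ne_zero.mpr (Ne.symm (hμε k j))
      have h3 := hμz k j
      simp only [hf]
      field_simp
      ring
  -- assemble
  have main : hbar * g ^ 2 * (S z ^ 2) + 2 * ((2 * z - ω) * S z - 2 * (M : ℂ))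
      = hbar * g ^ 2 * ∑ j ∈ Finset.univ.erase i, (S z - S (ε j)) / (z - ε j) := by
    linear_combination (hbar * g ^ 2) * E1 + g ^ 2 * E2 + (-2) * E3 + (g ^ 2 * hbar) * E4
  have hne : hbar * g ^ 2 ≠ 0 := mul_ne_zero hhbar (pow_ne_zero 2 hg)
  apply mul_left_cancel₀ hne
  have hfrac : hbar * g ^ 2 * (2 / (hbar * g ^ 2)) = 2 := by field_simp
  linear_combination main + ((2 * z - ω) * S z - 2 * (M : ℂ)) * hfrac
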